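/- Fix a real z with 0 < z < 1 and define, for real ε in a neighbourhood of 0, G(ε) = Σ_{k≥0} ( (2)_k (1+ε)_k (1+ε)_k / ((3+ε)_k (2+ε)_k k!) ) z^k. Then, as ε → 0, G(ε) − [ (2/z²)((1−z)·log(1−z) + z) + ε·(1/z²)( 7(1−z)·log(1−z) + 5z + (2−4z)·Li_2(z) ) + ε²·(1/z²)( 9(1−z)·log(1−z) + (7−12z)·Li_2(z) + (6z−2)·Li_3(z) + 4z ) ] = O(ε³). -/

import Mathlib

set_option maxHeartbeats 1000000

open Asymptotics Polynomial

/-- The polylogarithm `Li_s(z) = Σ_{k ≥ 1} z^k / k^s`. -/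
noncomputable def Li (s : ℕ) (z : ℝ) : ℝ := ∑' k : ℕ, z ^ (k + 1) / ((k : ℝ) + 1) ^ s

lemma ev2_eq (k : ℕ) : (ascPochhammer ℝ k).eval 2 = ((k+1).factorial : ℝ) := by
  induction k with
  | zero => simp
  | succ k ih =>
    rw [ascPochhammer_succ_right, eval_mul, ih]
    simp [Nat.factorial_succ]
    ring

lemma shift_eval (k : ℕ) (x : ℝ) :
    (ascPochhammer ℝ k).eval x * (x + k) = x * (ascPochhammer ℝ k).eval (x+1) := by
  have h1 : (ascPochhammer ℝ (k+1)).eval x = (ascPochhammer ℝ k).eval x * (x + k) := by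
    rw [ascPochhammer_succ_right]; simp
  have h2 : (ascPochhammer ℝ (k+1)).eval x = x * (ascPochhammer ℝ k).eval (x+1) := by
    rw [ascPochhammer_succ_left]; simp [eval_comp]
  rw [← h1, h2]

lemma term_eq (k : ℕ) (ε : ℝ) (hε : -1 < ε) (z : ℝ) :
    (ascPochhammer ℝ k).eval 2 * (ascPochhammer ℝ k).eval (1 + ε) *
        (ascPochhammer ℝ k).eval (1 + ε) /
      ((ascPochhammer ℝ k).eval (3 + ε) * (ascPochhammer ℝ k).eval (2 + ε) *
        (k.factorial : ℝ)) * z ^ k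
    = (1+ε)^2*(2+ε)*((k:ℝ)+1)/(((k:ℝ)+1+ε)^2*((k:ℝ)+2+ε)) * z ^ k := by
  have pA : 0 < (ascPochhammer ℝ k).eval (1+ε) := ascPochhammer_pos k _ (by linarith)
  have pB : 0 < (ascPochhammer ℝ k).eval (3+ε) := ascPochhammer_pos k _ (by linarith)
  have pC : 0 < (ascPochhammer ℝ k).eval (2+ε) := ascPochhammer_pos k _ (by linarith)
  have hk0 : (0:ℝ) ≤ (k:ℝ) := Nat.cast_nonneg k
  have pN : 0 < (k:ℝ)+1+ε := by linarith
  have pM : 0 < (k:ℝ)+2+ε := by linarith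
  have pF : (0:ℝ) < (k.factorial : ℝ) := by positivity
  have hAC : (ascPochhammer ℝ k).eval (1+ε) * ((k:ℝ)+1+ε)
      = (1+ε) * (ascPochhammer ℝ k).eval (2+ε) := by
    have h := shift_eval k (1+ε)
    rw [show (1:ℝ)+ε+1 = 2+ε by ring] at h
    linear_combination h
  have hCB : (ascPochhammer ℝ k).eval (2+ε) * ((k:ℝ)+2+ε)
      = (2+ε) * (ascPochhammer ℝ k).eval (3+ε) := by
    have h := shift_eval k (2+ε)
    rw [show (2:ℝ)+ε+1 = 3+ε by ring] at h
    linear_combination h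
  have h2 : (ascPochhammer ℝ k).eval 2 = ((k:ℝ)+1) * (k.factorial : ℝ) := by
    rw [ev2_eq, Nat.factorial_succ]
    push_cast
    ring
  rw [div_mul_eq_mul_div, div_mul_eq_mul_div, div_eq_div_iff (by positivity) (by positivity)]
  linear_combination
    ((ascPochhammer ℝ k).eval (1+ε) * (ascPochhammer ℝ k).eval (1+ε) *
      (((k:ℝ)+1+ε)^2*((k:ℝ)+2+ε)) * z^k) * h2 +
    (((k:ℝ)+1) * (k.factorial:ℝ) * z^k * (1+ε)^2 * (ascPochhammer ℝ k).eval (2+ε)) * hCB +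
    (((k:ℝ)+1) * (k.factorial:ℝ) * z^k * (((k:ℝ)+2+ε)) *
      ((ascPochhammer ℝ k).eval (1+ε) * ((k:ℝ)+1+ε) + (1+ε) * (ascPochhammer ℝ k).eval (2+ε))) * hAC

lemma rem_bound (n ε : ℝ) (hn : 1 ≤ n) (hε : |ε| ≤ 1/2) :
    |(1+ε)^2*(2+ε)*n/((n+ε)^2*(n+1+ε))
      - ((2/n - 2/(n+1)) + ε*(7/n - 4/n^2 - 7/(n+1) + 2/(n+1)^2)
         + ε^2*(9/n - 12/n^2 + 6/n^3 - 9/(n+1) + 7/(n+1)^2 - 2/(n+1)^3))|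
    ≤ 1440 * |ε|^3 := by
  obtain ⟨he1, he2⟩ := abs_le.mp hε
  have hn0 : 0 < n := by linarith
  have hm0 : 0 < n+1 := by linarith
  have hN : n/2 ≤ n+ε := by linarith
  have hM : (n+1)/2 ≤ n+1+ε := by linarith
  have hN0 : 0 < n+ε := by linarith
  have hM0 : 0 < n+1+ε := by linarith
  set g : ℝ := (n^7 - 9*n^6 + n^5 + 23*n^4 + 7*n^3 - 15*n^2 - 8*n)
      + ε*(-12*n^5 + 12*n^4 + 30*n^3 - 4*n^2 - 20*n - 6)
      + ε^2*(-4*n^4 + 7*n^3 + 9*n^2 - 6*n - 6) with hg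
  have iden : (1+ε)^2*(2+ε)*n/((n+ε)^2*(n+1+ε))
      - ((2/n - 2/(n+1)) + ε*(7/n - 4/n^2 - 7/(n+1) + 2/(n+1)^2)
         + ε^2*(9/n - 12/n^2 + 6/n^3 - 9/(n+1) + 7/(n+1)^2 - 2/(n+1)^3))
      = ε^3 * g / (n^3*(n+1)^3*(n+ε)^2*(n+1+ε)) := by
    rw [hg]
    field_simp
    ring
  rw [iden]
  have p1 : n ≤ n^7 := by
    calc n = n^1 := (pow_one n).symm
    _ ≤ n^7 := pow_le_pow_right₀ hn (by norm_num)
  have p2 : n^2 ≤ n^7 := pow_le_pow_right₀ hn (by norm_num)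
  have p3 : n^3 ≤ n^7 := pow_le_pow_right₀ hn (by norm_num)
  have p4 : n^4 ≤ n^7 := pow_le_pow_right₀ hn (by norm_num)
  have p5 : n^5 ≤ n^7 := pow_le_pow_right₀ hn (by norm_num)
  have p6 : n^6 ≤ n^7 := pow_le_pow_right₀ hn (by norm_num)
  have p0 : (1:ℝ) ≤ n^7 := one_le_pow₀ hn
  have q1 : (0:ℝ) ≤ n := hn0.le
  have q2 : (0:ℝ) ≤ n^2 := by positivity
  have q3 : (0:ℝ) ≤ n^3 := by positivity
  have q4 : (0:ℝ) ≤ n^4 := by positivity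
  have q5 : (0:ℝ) ≤ n^5 := by positivity
  have q6 : (0:ℝ) ≤ n^6 := by positivity
  have hg1 : |(-12*n^5 + 12*n^4 + 30*n^3 - 4*n^2 - 20*n - 6 : ℝ)| ≤ 84 * n^7 := by
    rw [abs_le]; constructor <;> linarith
  have hg2 : |(-4*n^4 + 7*n^3 + 9*n^2 - 6*n - 6 : ℝ)| ≤ 32 * n^7 := by
    rw [abs_le]; constructor <;> linarith
  have he1' : |ε * (-12*n^5 + 12*n^4 + 30*n^3 - 4*n^2 - 20*n - 6)| ≤ 84 * n^7 := by
    rw [abs_mul]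
    calc |ε| * |(-12*n^5 + 12*n^4 + 30*n^3 - 4*n^2 - 20*n - 6 : ℝ)|
        ≤ 1 * (84 * n^7) := by
          apply mul_le_mul (by linarith) hg1 (abs_nonneg _) (by norm_num)
    _ = 84 * n^7 := by ring
  have he2' : |ε^2 * (-4*n^4 + 7*n^3 + 9*n^2 - 6*n - 6)| ≤ 32 * n^7 := by
    rw [abs_mul, abs_pow]
    calc |ε|^2 * |(-4*n^4 + 7*n^3 + 9*n^2 - 6*n - 6 : ℝ)|
        ≤ 1 * (32 * n^7) := by
          apply mul_le_mul _ hg2 (abs_nonneg _) (by norm_num)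
          nlinarith [abs_nonneg ε]
    _ = 32 * n^7 := by ring
  obtain ⟨ha1, hb1⟩ := abs_le.mp he1'
  obtain ⟨ha2, hb2⟩ := abs_le.mp he2'
  have hgabs : |g| ≤ 180 * n^7 := by
    rw [hg, abs_le]; constructor <;> linarith
  have d1 : (n/2)^2 ≤ (n+ε)^2 := by
    apply pow_le_pow_left₀ (by positivity) hN
  have hden : n^7/8 ≤ n^3*(n+1)^3*(n+ε)^2*(n+1+ε) := by
    have step : n^3*(n+1)^3*(n/2)^2*((n+1)/2) ≤ n^3*(n+1)^3*(n+ε)^2*(n+1+ε) := by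
      gcongr
    have lb : n^7/8 ≤ n^3*(n+1)^3*(n/2)^2*((n+1)/2) := by
      nlinarith [pow_pos hn0 5, sq_nonneg (n+1)]
    linarith
  have hden0 : 0 < n^3*(n+1)^3*(n+ε)^2*(n+1+ε) := by positivity
  rw [abs_div, abs_mul, abs_pow, abs_of_pos hden0, div_le_iff₀ hden0]
  calc |ε|^3 * |g| ≤ |ε|^3 * (180 * n^7) := by
        apply mul_le_mul_of_nonneg_left hgabs (by positivity)
  _ = 1440 * |ε|^3 * (n^7/8) := by ring
  _ ≤ 1440 * |ε|^3 * (n^3*(n+1)^3*(n+ε)^2*(n+1+ε)) := by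
        apply mul_le_mul_of_nonneg_left hden (by positivity)

lemma shift_hasSum {f : ℕ → ℝ} {S : ℝ} (h : HasSum f S) :
    HasSum (fun n : ℕ => f (n+1)) (S - f 0) := by
  apply (hasSum_nat_add_iff 1).mpr
  simpa using h

theorem stmt18 (z : ℝ) (hz0 : 0 < z) (hz1 : z < 1) :
    (fun ε : ℝ =>
        (∑' k : ℕ,
          (ascPochhammer ℝ k).eval 2 * (ascPochhammer ℝ k).eval (1 + ε) *
              (ascPochhammer ℝ k).eval (1 + ε) /
            ((ascPochhammer ℝ k).eval (3 + ε) * (ascPochhammer ℝ k).eval (2 + ε) *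
              (k.factorial : ℝ)) * z ^ k) -
        ((2 / z ^ 2) * ((1 - z) * Real.log (1 - z) + z) +
          ε * (1 / z ^ 2) *
            (7 * (1 - z) * Real.log (1 - z) + 5 * z + (2 - 4 * z) * Li 2 z) +
          ε ^ 2 * (1 / z ^ 2) *
            (9 * (1 - z) * Real.log (1 - z) + (7 - 12 * z) * Li 2 z +
              (6 * z - 2) * Li 3 z + 4 * z)))
      =O[nhds 0] fun ε : ℝ => ε ^ 3 := by
  have hzne : z ≠ 0 := hz0.ne'
  have hzabs : |z| < 1 := abs_lt.mpr ⟨by linarith, hz1⟩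
  set L : ℝ := Real.log (1 - z) with hL
  -- basic series
  have hsummable : ∀ s : ℕ, Summable (fun k : ℕ => z^(k+1)/((k:ℝ)+1)^s) := by
    intro s
    apply Summable.of_nonneg_of_le (fun k => by positivity)
      (fun k => ?_) ((summable_geometric_of_lt_one hz0.le hz1).mul_left z)
    have hk1 : (1:ℝ) ≤ (k:ℝ)+1 := by linarith [(Nat.cast_nonneg k : (0:ℝ) ≤ (k:ℝ))]
    have h1 : (1:ℝ) ≤ ((k:ℝ)+1)^s := one_le_pow₀ hk1
    calc z^(k+1)/((k:ℝ)+1)^s ≤ z^(k+1)/1 := by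
          apply div_le_div_of_nonneg_left (by positivity) (by norm_num) h1
    _ = z * z^k := by rw [div_one, pow_succ]; ring
  have hLi : ∀ s : ℕ, HasSum (fun k : ℕ => z^(k+1)/((k:ℝ)+1)^s) (Li s z) :=
    fun s => (hsummable s).hasSum
  have hlogsum : HasSum (fun k : ℕ => z^(k+1)/((k:ℝ)+1)) (-L) := by
    rw [hL]
    exact Real.hasSum_pow_div_log_of_abs_lt_one hzabs
  -- divide by z
  have h1 : HasSum (fun k : ℕ => z^k/((k:ℝ)+1)) (-L/z) := by
    refine (hasSum_mul_left_iff hzne).mp ?_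
    have e1 : (fun i : ℕ => z * (z^i/((i:ℝ)+1))) = fun i : ℕ => z^(i+1)/((i:ℝ)+1) := by
      funext i; rw [pow_succ]; ring
    rw [e1, show z * (-L/z) = -L by field_simp]
    exact hlogsum
  have h23 : ∀ s : ℕ, HasSum (fun k : ℕ => z^k/((k:ℝ)+1)^s) (Li s z / z) := by
    intro s
    refine (hasSum_mul_left_iff hzne).mp ?_
    have e1 : (fun i : ℕ => z * (z^i/((i:ℝ)+1)^s)) = fun i : ℕ => z^(i+1)/((i:ℝ)+1)^s := by
      funext i; rw [pow_succ]; ring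
    rw [e1, show z * (Li s z/z) = Li s z by rw [mul_comm]; exact div_mul_cancel₀ _ hzne]
    exact hLi s
  -- shifted series
  have hg1 : HasSum (fun k : ℕ => z^k/((k:ℝ)+2)) ((-L - z)/z^2) := by
    refine (hasSum_mul_left_iff (pow_ne_zero 2 hzne)).mp ?_
    have h := shift_hasSum hlogsum
    simp only [Nat.cast_add, Nat.cast_one] at h
    have e1 : (fun i : ℕ => z^2 * (z^i/((i:ℝ)+2))) = fun i : ℕ => z^(i+1+1)/((i:ℝ)+1+1) := by
      funext i; rw [pow_succ, pow_succ]; ring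
    rw [e1, show z^2 * ((-L - z)/z^2) = -L - (z^(0+1)/((0:ℕ):ℝ)^0 ) by norm_num; field_simp]
    · convert h using 2
      · rfl
      norm_num
  have hg23 : ∀ s : ℕ, HasSum (fun k : ℕ => z^k/((k:ℝ)+2)^s) ((Li s z - z)/z^2) := by
    intro s
    refine (hasSum_mul_left_iff (pow_ne_zero 2 hzne)).mp ?_
    have h := shift_hasSum (hLi s)
    simp only [Nat.cast_add, Nat.cast_one] at h
    have e1 : (fun i : ℕ => z^2 * (z^i/((i:ℝ)+2)^s)) = fun i : ℕ => z^(i+1+1)/((i:ℝ)+1+1)^s := by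
      funext i; rw [pow_succ, pow_succ]; ring
    rw [e1]
    have h0 : z^(0+1)/((0:ℝ)+1)^s = z := by norm_num
    rw [show z^2 * ((Li s z - z)/z^2) = Li s z - z by field_simp]
    convert h using 2
    · rfl
    norm_num
  -- coefficient series
  have SA : HasSum (fun k : ℕ => (2/((k:ℝ)+1) - 2/((k:ℝ)+2)) * z^k)
      (2/z^2 * ((1-z)*L + z)) := by
    have h := (h1.mul_left 2).sub (hg1.mul_left 2)
    have e : (fun k : ℕ => 2*(z^k/((k:ℝ)+1)) - 2*(z^k/((k:ℝ)+2)))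
        = fun k : ℕ => (2/((k:ℝ)+1) - 2/((k:ℝ)+2)) * z^k := by
      funext k
      have hk1 : ((k:ℝ)+1) ≠ 0 := by positivity
      have hk2 : ((k:ℝ)+2) ≠ 0 := by positivity
      field_simp
    rw [e] at h
    convert h using 1
    · rfl
    field_simp
    ring
  have SB : HasSum (fun k : ℕ =>
      (7/((k:ℝ)+1) - 4/((k:ℝ)+1)^2 - 7/((k:ℝ)+2) + 2/((k:ℝ)+2)^2) * z^k)
      (1/z^2 * (7*(1-z)*L + 5*z + (2-4*z)*Li 2 z)) := by
    have h := (((h1.mul_left 7).sub ((h23 2).mul_left 4)).sub (hg1.mul_left 7)).add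
      ((hg23 2).mul_left 2)
    have e : (fun k : ℕ => 7*(z^k/((k:ℝ)+1)) - 4*(z^k/((k:ℝ)+1)^2) - 7*(z^k/((k:ℝ)+2))
        + 2*(z^k/((k:ℝ)+2)^2))
        = fun k : ℕ => (7/((k:ℝ)+1) - 4/((k:ℝ)+1)^2 - 7/((k:ℝ)+2) + 2/((k:ℝ)+2)^2) * z^k := by
      funext k
      have hk1 : ((k:ℝ)+1) ≠ 0 := by positivity
      have hk2 : ((k:ℝ)+2) ≠ 0 := by positivity
      field_simp
    rw [e] at h
    convert h using 1
    · rfl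
    field_simp
    ring
  have SC : HasSum (fun k : ℕ =>
      (9/((k:ℝ)+1) - 12/((k:ℝ)+1)^2 + 6/((k:ℝ)+1)^3 - 9/((k:ℝ)+2) + 7/((k:ℝ)+2)^2
        - 2/((k:ℝ)+2)^3) * z^k)
      (1/z^2 * (9*(1-z)*L + (7-12*z)*Li 2 z + (6*z-2)*Li 3 z + 4*z)) := by
    have h := ((((h1.mul_left 9).sub ((h23 2).mul_left 12)).add ((h23 3).mul_left 6)).sub
      (hg1.mul_left 9)).add (((hg23 2).mul_left 7).sub ((hg23 3).mul_left 2))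
    have e : (fun k : ℕ => 9*(z^k/((k:ℝ)+1)) - 12*(z^k/((k:ℝ)+1)^2) + 6*(z^k/((k:ℝ)+1)^3)
        - 9*(z^k/((k:ℝ)+2)) + (7*(z^k/((k:ℝ)+2)^2) - 2*(z^k/((k:ℝ)+2)^3)))
        = fun k : ℕ => (9/((k:ℝ)+1) - 12/((k:ℝ)+1)^2 + 6/((k:ℝ)+1)^3 - 9/((k:ℝ)+2)
          + 7/((k:ℝ)+2)^2 - 2/((k:ℝ)+2)^3) * z^k := by
      funext k
      have hk1 : ((k:ℝ)+1) ≠ 0 := by positivity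
      have hk2 : ((k:ℝ)+2) ≠ 0 := by positivity
      field_simp
      ring
    rw [e] at h
    convert h using 1
    · rfl
    field_simp
    ring
  -- main estimate
  rw [Asymptotics.isBigO_iff]
  refine ⟨1440 * (1-z)⁻¹, ?_⟩
  have hmem : Metric.ball (0:ℝ) (1/2) ∈ nhds (0:ℝ) := Metric.ball_mem_nhds _ (by norm_num)
  filter_upwards [hmem] with ε hball
  have hεabs : |ε| ≤ 1/2 := by
    have := Metric.mem_ball.mp hball
    rw [Real.dist_eq, sub_zero] at this
    linarith
  have hεm1 : -1 < ε := by
    have := abs_le.mp hεabs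
    linarith [this.1]
  set t : ℕ → ℝ := fun k => (1+ε)^2*(2+ε)*((k:ℝ)+1)/(((k:ℝ)+1+ε)^2*((k:ℝ)+2+ε)) * z^k with ht
  set q : ℕ → ℝ := fun k => (2/((k:ℝ)+1) - 2/((k:ℝ)+2)) * z^k
      + (ε * ((7/((k:ℝ)+1) - 4/((k:ℝ)+1)^2 - 7/((k:ℝ)+2) + 2/((k:ℝ)+2)^2) * z^k)
      + ε^2 * ((9/((k:ℝ)+1) - 12/((k:ℝ)+1)^2 + 6/((k:ℝ)+1)^3 - 9/((k:ℝ)+2) + 7/((k:ℝ)+2)^2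
          - 2/((k:ℝ)+2)^3) * z^k)) with hq
  have hqsum : HasSum q (2/z^2 * ((1-z)*L + z)
      + (ε * (1/z^2 * (7*(1-z)*L + 5*z + (2-4*z)*Li 2 z))
        + ε^2 * (1/z^2 * (9*(1-z)*L + (7-12*z)*Li 2 z + (6*z-2)*Li 3 z + 4*z)))) := by
    rw [hq]
    exact SA.add ((SB.mul_left ε).add (SC.mul_left (ε^2)))
  have hrk : ∀ k : ℕ, |t k - q k| ≤ 1440 * |ε|^3 * z^k := by
    intro k
    have hn1 : (1:ℝ) ≤ (k:ℝ)+1 := by linarith [(Nat.cast_nonneg k : (0:ℝ) ≤ (k:ℝ))]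
    have h := rem_bound ((k:ℝ)+1) ε hn1 hεabs
    have e : t k - q k = ((1+ε)^2*(2+ε)*((k:ℝ)+1)/((((k:ℝ)+1)+ε)^2*(((k:ℝ)+1)+1+ε))
        - ((2/((k:ℝ)+1) - 2/(((k:ℝ)+1)+1))
          + ε*(7/((k:ℝ)+1) - 4/((k:ℝ)+1)^2 - 7/(((k:ℝ)+1)+1) + 2/(((k:ℝ)+1)+1)^2)
          + ε^2*(9/((k:ℝ)+1) - 12/((k:ℝ)+1)^2 + 6/((k:ℝ)+1)^3 - 9/(((k:ℝ)+1)+1)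
            + 7/(((k:ℝ)+1)+1)^2 - 2/(((k:ℝ)+1)+1)^3))) * z^k := by
      rw [ht, hq]
      have e2 : ((k:ℝ)+1)+1 = (k:ℝ)+2 := by ring
      rw [e2]
      ring
    rw [e, abs_mul, abs_of_nonneg (pow_nonneg hz0.le k)]
    exact mul_le_mul_of_nonneg_right h (pow_nonneg hz0.le k)
  have hr_sum : Summable (fun k : ℕ => t k - q k) := by
    rw [← summable_abs_iff]
    exact Summable.of_nonneg_of_le (fun k => abs_nonneg _) hrk
      ((summable_geometric_of_lt_one hz0.le hz1).mul_left _)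
  have hqsummable : Summable q := hqsum.summable
  have htsum : (∑' k : ℕ,
      (ascPochhammer ℝ k).eval 2 * (ascPochhammer ℝ k).eval (1 + ε) *
          (ascPochhammer ℝ k).eval (1 + ε) /
        ((ascPochhammer ℝ k).eval (3 + ε) * (ascPochhammer ℝ k).eval (2 + ε) *
          (k.factorial : ℝ)) * z ^ k) = ∑' k : ℕ, t k :=
    tsum_congr fun k => term_eq k ε hεm1 z
  have key : (∑' k : ℕ, t k) = (2/z^2 * ((1-z)*L + z)
      + (ε * (1/z^2 * (7*(1-z)*L + 5*z + (2-4*z)*Li 2 z))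
        + ε^2 * (1/z^2 * (9*(1-z)*L + (7-12*z)*Li 2 z + (6*z-2)*Li 3 z + 4*z))))
      + ∑' k : ℕ, (t k - q k) := by
    rw [tsum_congr (fun k => (by ring : t k = q k + (t k - q k))),
      Summable.tsum_add hqsummable hr_sum, hqsum.tsum_eq]
  have hb : ‖∑' k : ℕ, (t k - q k)‖ ≤ 1440 * |ε|^3 * (1-z)⁻¹ :=
    tsum_of_norm_bounded ((hasSum_geometric_of_lt_one hz0.le hz1).mul_left (1440 * |ε|^3))
      (fun k => by simpa [Real.norm_eq_abs] using hrk k)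
  have hfin : (2/z^2 * ((1-z)*L + z)
      + (ε * (1/z^2 * (7*(1-z)*L + 5*z + (2-4*z)*Li 2 z))
        + ε^2 * (1/z^2 * (9*(1-z)*L + (7-12*z)*Li 2 z + (6*z-2)*Li 3 z + 4*z))))
      + (∑' k : ℕ, (t k - q k))
      - (2 / z ^ 2 * ((1 - z) * L + z) +
          ε * (1 / z ^ 2) * (7 * (1 - z) * L + 5 * z + (2 - 4 * z) * Li 2 z) +
          ε ^ 2 * (1 / z ^ 2) *
            (9 * (1 - z) * L + (7 - 12 * z) * Li 2 z + (6 * z - 2) * Li 3 z + 4 * z))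
      = ∑' k : ℕ, (t k - q k) := by ring
  rw [htsum, key, hfin]
  calc ‖∑' k : ℕ, (t k - q k)‖ ≤ 1440 * |ε|^3 * (1-z)⁻¹ := hb
  _ = 1440 * (1-z)⁻¹ * ‖ε^3‖ := by rw [Real.norm_eq_abs, abs_pow]; ring
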